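/- Let Γ be a finite simple graph and X a subset of its vertices such that the subgraph of Γ induced by X is regular and every vertex outside X has either 0, |X|/2, or |X| neighbors in X. Let Γ' be the graph obtained from Γ by, for each vertex y ∉ X with exactly |X|/2 neighbors in X, deleting the edges between y and its neighbors in X and inserting edges between y and the vertices of X not previously adjacent to y. Then Γ' is cospectral with Γ with respect to the adjacency matrix. -/
import Mathlib

open scoped Classical

/-- Two finite graphs are cospectral (w.r.t. the adjacency matrix) if their adjacency
matrices have the same characteristic polynomial. -/
noncomputable def Cospectral {V W : Type*} [Fintype V] [DecidableEq V] [Fintype W]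
    [DecidableEq W] (G : SimpleGraph V) (H : SimpleGraph W) : Prop :=
  (G.adjMatrix ℤ).charpoly = (H.adjMatrix ℤ).charpoly

open Matrix Polynomial in
lemma charpoly_conj_aux {n R : Type*} [CommRing R] [Fintype n] [DecidableEq n]
    (Q M : Matrix n n R) (h : Q * Q = 1) : (Q * M * Q).charpoly = M.charpoly := by
  have hc : (Q.map C) * (Q.map C) = (1 : Matrix n n R[X]) := by
    rw [← Matrix.map_mul, h, Matrix.map_one _ (by simp) (by simp)]
  have hs : ∀ N : Matrix n n R[X], (Matrix.scalar n (X : R[X])) * N = N * (Matrix.scalar n X) := by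
    intro N
    exact (Matrix.scalar_commute (X : R[X]) (fun r => Commute.all _ _) N)
  have key : charmatrix (Q * M * Q) = (Q.map C) * charmatrix M * (Q.map C) := by
    rw [charmatrix, charmatrix]
    simp only [RingHom.mapMatrix_apply, Matrix.map_mul]
    rw [Matrix.mul_sub, Matrix.sub_mul]
    congr 1
    rw [← hs (Q.map C), Matrix.mul_assoc, hc, Matrix.mul_one]
  rw [Matrix.charpoly, Matrix.charpoly, key, det_mul, det_mul]
  have h1 : (Q.map C).det * (Q.map C).det = 1 := by
    rw [← det_mul, hc, det_one]
  calc (Q.map C).det * (charmatrix M).det * (Q.map C).det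
      = (charmatrix M).det * ((Q.map C).det * (Q.map C).det) := by ring
    _ = (charmatrix M).det := by rw [h1, mul_one]

lemma adjMatrix_cast_aux {V : Type*} [Fintype V] [DecidableEq V] (G : SimpleGraph V) :
    (G.adjMatrix ℤ).map (Int.castRingHom ℚ) = G.adjMatrix ℚ := by
  ext u v
  simp [SimpleGraph.adjMatrix_apply, apply_ite]

lemma cospectral_of_rat {V : Type*} [Fintype V] [DecidableEq V] (G H : SimpleGraph V)
    (h : (G.adjMatrix ℚ).charpoly = (H.adjMatrix ℚ).charpoly) : Cospectral G H := by
  unfold Cospectral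
  apply Polynomial.map_injective (Int.castRingHom ℚ) Int.cast_injective
  rw [← Matrix.charpoly_map, ← Matrix.charpoly_map, adjMatrix_cast_aux, adjMatrix_cast_aux, h]

lemma adj_entry_iff {V : Type*} [Fintype V] [DecidableEq V] (G H : SimpleGraph V) (u w : V)
    (h : G.Adj u w ↔ H.Adj u w) : (G.adjMatrix ℚ) u w = (H.adjMatrix ℚ) u w := by
  simp [SimpleGraph.adjMatrix_apply, h]

lemma adj_entry_not_iff {V : Type*} [Fintype V] [DecidableEq V] (G H : SimpleGraph V) (u w : V)
    (h : G.Adj u w ↔ ¬ H.Adj u w) : (G.adjMatrix ℚ) u w = 1 - (H.adjMatrix ℚ) u w := by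
  by_cases ha : H.Adj u w
  · have h2 : ¬ G.Adj u w := fun hg => (h.mp hg) ha
    simp [SimpleGraph.adjMatrix_apply, ha, h2]
  · have h2 : G.Adj u w := h.mpr ha
    simp [SimpleGraph.adjMatrix_apply, ha, h2]

theorem stmt1 {V : Type*} [Fintype V] [DecidableEq V]
    (Γ Γ' : SimpleGraph V) (X : Set V)
    (hreg : ∃ d : ℕ, ∀ x ∈ X, (Γ.neighborSet x ∩ X).ncard = d)
    (hhalf : ∀ y ∉ X,
      (Γ.neighborSet y ∩ X).ncard = 0 ∨
        2 * (Γ.neighborSet y ∩ X).ncard = X.ncard ∨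
        (Γ.neighborSet y ∩ X).ncard = X.ncard)
    (hswitch : ∀ y ∉ X, ∀ x ∈ X,
      (2 * (Γ.neighborSet y ∩ X).ncard = X.ncard → (Γ'.Adj y x ↔ ¬ Γ.Adj y x)) ∧
      (2 * (Γ.neighborSet y ∩ X).ncard ≠ X.ncard → (Γ'.Adj y x ↔ Γ.Adj y x)))
    (hsame : ∀ u v : V, ((u ∈ X ∧ v ∈ X) ∨ (u ∉ X ∧ v ∉ X)) → (Γ'.Adj u v ↔ Γ.Adj u v)) :
    Cospectral Γ Γ' := by
  classical
  obtain ⟨d, hd⟩ := hreg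
  have hXfin : X.Finite := X.toFinite
  by_cases hX0 : X.ncard = 0
  · -- X is empty, so Γ' = Γ
    have hXe : X = ∅ := (Set.ncard_eq_zero hXfin).mp hX0
    have hGG : Γ' = Γ := by
      ext u v
      exact hsame u v (Or.inr ⟨by simp [hXe], by simp [hXe]⟩)
    rw [hGG]
    unfold Cospectral
    rfl
  · -- main case
    have hnQ : ((X.ncard : ℚ)) ≠ 0 := Nat.cast_ne_zero.mpr hX0
    set c : ℚ := 2 / (X.ncard : ℚ) with hcdef
    set B : Matrix V V ℚ := Matrix.of (fun u v => if u ∈ X ∧ v ∈ X then 1 else 0) with hBdef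
    set S : Matrix V V ℚ :=
      Matrix.diagonal (fun u => if u ∈ X then (-1 : ℚ) else 1) with hSdef
    set Q : Matrix V V ℚ := c • B + S with hQdef
    -- counting sums
    have hcount : (∑ v : V, if v ∈ X then (1 : ℚ) else 0) = (X.ncard : ℚ) := by
      rw [Set.ncard_eq_toFinset_card']
      simp only [← Set.mem_toFinset]
      rw [Finset.sum_ite_mem, Finset.univ_inter, Finset.sum_const, nsmul_eq_mul, mul_one]
    have hsumcol : ∀ (G : SimpleGraph V) (w : V),
        (∑ v : V, if v ∈ X then (G.adjMatrix ℚ) v w else 0)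
          = ((G.neighborSet w ∩ X).ncard : ℚ) := by
      intro G w
      rw [Set.ncard_eq_toFinset_card']
      have h1 : ∀ v : V, (if v ∈ X then (G.adjMatrix ℚ) v w else 0)
          = if v ∈ (G.neighborSet w ∩ X).toFinset then (1 : ℚ) else 0 := by
        intro v
        by_cases hv : v ∈ X <;> by_cases ha : G.Adj v w <;>
          simp [SimpleGraph.adjMatrix_apply, hv, ha, Set.mem_toFinset, Set.mem_inter_iff,
            SimpleGraph.mem_neighborSet, G.adj_comm w v]
      rw [Finset.sum_congr rfl (fun v _ => h1 v), Finset.sum_ite_mem, Finset.univ_inter,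
        Finset.sum_const, nsmul_eq_mul, mul_one]
    have hsumrow : ∀ (G : SimpleGraph V) (u : V),
        (∑ v : V, if v ∈ X then (G.adjMatrix ℚ) u v else 0)
          = ((G.neighborSet u ∩ X).ncard : ℚ) := by
      intro G u
      rw [Set.ncard_eq_toFinset_card']
      have h1 : ∀ v : V, (if v ∈ X then (G.adjMatrix ℚ) u v else 0)
          = if v ∈ (G.neighborSet u ∩ X).toFinset then (1 : ℚ) else 0 := by
        intro v
        by_cases hv : v ∈ X <;> by_cases ha : G.Adj u v <;>
          simp [SimpleGraph.adjMatrix_apply, hv, ha, Set.mem_toFinset, Set.mem_inter_iff,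
            SimpleGraph.mem_neighborSet]
      rw [Finset.sum_congr rfl (fun v _ => h1 v), Finset.sum_ite_mem, Finset.univ_inter,
        Finset.sum_const, nsmul_eq_mul, mul_one]
    -- matrix identities for B and S
    have hB2 : B * B = (X.ncard : ℚ) • B := by
      ext u w
      rw [Matrix.mul_apply]
      have h1 : ∀ v : V, B u v * B v w
          = if u ∈ X ∧ w ∈ X then (if v ∈ X then (1 : ℚ) else 0) else 0 := by
        intro v
        by_cases hu : u ∈ X <;> by_cases hv : v ∈ X <;> by_cases hw : w ∈ X <;>
          simp [hBdef, hu, hv, hw]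
      rw [Finset.sum_congr rfl (fun v _ => h1 v)]
      by_cases h : u ∈ X ∧ w ∈ X
      · simp only [if_pos h]
        rw [hcount]
        simp [hBdef, h]
      · simp only [if_neg h]
        rw [Finset.sum_const_zero]
        simp [hBdef, h]
    have hSB : S * B = -B := by
      ext u w
      rw [hSdef, Matrix.diagonal_mul, Matrix.neg_apply]
      by_cases hu : u ∈ X <;> by_cases hw : w ∈ X <;> simp [hBdef, hu, hw]
    have hBS : B * S = -B := by
      ext u w
      rw [hSdef, Matrix.mul_diagonal, Matrix.neg_apply]
      by_cases hu : u ∈ X <;> by_cases hw : w ∈ X <;> simp [hBdef, hu, hw]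
    have hSS : S * S = 1 := by
      rw [hSdef, Matrix.diagonal_mul_diagonal]
      have h1 : (fun u => (if u ∈ X then (-1 : ℚ) else 1) * (if u ∈ X then (-1 : ℚ) else 1))
          = fun _ => (1 : ℚ) := by
        funext u; by_cases hu : u ∈ X <;> simp [hu]
      rw [h1, Matrix.diagonal_one]
    have hc2 : c * c * (X.ncard : ℚ) = c + c := by
      rw [hcdef]; field_simp; ring
    have hQ2 : Q * Q = 1 := by
      have expand : Q * Q = (c * c) • (B * B) + c • (B * S) + c • (S * B) + S * S := by
        rw [hQdef]
        simp only [Matrix.add_mul, Matrix.mul_add, Matrix.smul_mul, Matrix.mul_smul, smul_smul, smul_add]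
        abel
      rw [expand, hB2, hBS, hSB, hSS, smul_smul, hc2, add_smul, smul_neg]
      abel
    -- basic adjacency facts
    have hfull : ∀ y, (Γ.neighborSet y ∩ X).ncard = X.ncard → ∀ x ∈ X, Γ.Adj y x := by
      intro y hy x hx
      have hsub : Γ.neighborSet y ∩ X ⊆ X := Set.inter_subset_right
      have heq := Set.eq_of_subset_of_ncard_le hsub (le_of_eq hy.symm) hXfin
      have hx' : x ∈ Γ.neighborSet y ∩ X := by rw [heq]; exact hx
      exact hx'.1
    have hzero : ∀ y, (Γ.neighborSet y ∩ X).ncard = 0 → ∀ x ∈ X, ¬ Γ.Adj y x := by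
      intro y hy x hx hadj
      have hempty : Γ.neighborSet y ∩ X = ∅ :=
        (Set.ncard_eq_zero ((Γ.neighborSet y ∩ X).toFinite)).mp hy
      have : x ∈ Γ.neighborSet y ∩ X := ⟨hadj, hx⟩
      rw [hempty] at this
      exact this
    -- Γ' neighbor counts inside X
    have he'in : ∀ u ∈ X, (Γ'.neighborSet u ∩ X) = (Γ.neighborSet u ∩ X) := by
      intro u hu; ext x
      simp only [Set.mem_inter_iff, SimpleGraph.mem_neighborSet]
      constructor
      · rintro ⟨h1, h2⟩; exact ⟨(hsame u x (Or.inl ⟨hu, h2⟩)).mp h1, h2⟩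
      · rintro ⟨h1, h2⟩; exact ⟨(hsame u x (Or.inl ⟨hu, h2⟩)).mpr h1, h2⟩
    have he'out_ne : ∀ u ∉ X, 2 * (Γ.neighborSet u ∩ X).ncard ≠ X.ncard →
        (Γ'.neighborSet u ∩ X) = (Γ.neighborSet u ∩ X) := by
      intro u hu hne; ext x
      simp only [Set.mem_inter_iff, SimpleGraph.mem_neighborSet]
      constructor
      · rintro ⟨h1, h2⟩; exact ⟨((hswitch u hu x h2).2 hne).mp h1, h2⟩
      · rintro ⟨h1, h2⟩; exact ⟨((hswitch u hu x h2).2 hne).mpr h1, h2⟩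
    have he'out_eq : ∀ u ∉ X, 2 * (Γ.neighborSet u ∩ X).ncard = X.ncard →
        (Γ'.neighborSet u ∩ X).ncard = (Γ.neighborSet u ∩ X).ncard := by
      intro u hu heq
      have hset : Γ'.neighborSet u ∩ X = X \ (Γ.neighborSet u ∩ X) := by
        ext x
        simp only [Set.mem_inter_iff, SimpleGraph.mem_neighborSet, Set.mem_diff]
        constructor
        · rintro ⟨h1, h2⟩
          exact ⟨h2, fun hcon => (((hswitch u hu x h2).1 heq).mp h1) hcon.1⟩
        · rintro ⟨h2, h1⟩
          exact ⟨((hswitch u hu x h2).1 heq).mpr (fun ha => h1 ⟨ha, h2⟩), h2⟩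
      rw [hset, Set.ncard_diff Set.inter_subset_right (Set.toFinite _)]
      omega
    -- scalar facts
    have hck : ∀ k : ℕ, 2 * k = X.ncard → c * (k : ℚ) = 1 := by
      intro k hk
      have hk0 : (k : ℚ) ≠ 0 := Nat.cast_ne_zero.mpr (by omega)
      have hn2k : ((X.ncard : ℚ)) = 2 * (k : ℚ) := by exact_mod_cast hk.symm
      rw [hcdef, hn2k]
      field_simp
    have hcn : c * (X.ncard : ℚ) = 2 := by
      rw [hcdef]; field_simp
    -- the key intertwining identity
    have hQA : Q * (Γ.adjMatrix ℚ) = (Γ'.adjMatrix ℚ) * Q := by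
      have expandL : Q * Γ.adjMatrix ℚ = c • (B * Γ.adjMatrix ℚ) + S * Γ.adjMatrix ℚ := by
        rw [hQdef, Matrix.add_mul, Matrix.smul_mul]
      have expandR : Γ'.adjMatrix ℚ * Q = c • (Γ'.adjMatrix ℚ * B) + Γ'.adjMatrix ℚ * S := by
        rw [hQdef, Matrix.mul_add, Matrix.mul_smul]
      rw [expandL, expandR]
      ext u w
      have hBA : (B * Γ.adjMatrix ℚ) u w
          = if u ∈ X then ((Γ.neighborSet w ∩ X).ncard : ℚ) else 0 := by
        rw [Matrix.mul_apply]
        by_cases hu : u ∈ X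
        · rw [if_pos hu, ← hsumcol Γ w]
          apply Finset.sum_congr rfl
          intro v _
          by_cases hv : v ∈ X <;> simp [hBdef, hu, hv]
        · rw [if_neg hu]
          apply Finset.sum_eq_zero
          intro v _
          simp [hBdef, hu]
      have hA'B : (Γ'.adjMatrix ℚ * B) u w
          = if w ∈ X then ((Γ'.neighborSet u ∩ X).ncard : ℚ) else 0 := by
        rw [Matrix.mul_apply]
        by_cases hw : w ∈ X
        · rw [if_pos hw, ← hsumrow Γ' u]
          apply Finset.sum_congr rfl
          intro v _
          by_cases hv : v ∈ X <;> simp [hBdef, hw, hv]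
        · rw [if_neg hw]
          apply Finset.sum_eq_zero
          intro v _
          simp [hBdef, hw]
      simp only [Matrix.add_apply, Matrix.smul_apply, smul_eq_mul]
      rw [hBA, hA'B, hSdef, Matrix.diagonal_mul, Matrix.mul_diagonal]
      by_cases hu : u ∈ X <;> by_cases hw : w ∈ X
      · -- both in X
        simp only [if_pos hu, if_pos hw]
        have h1 : (Γ.neighborSet w ∩ X).ncard = d := hd w hw
        have h2 : (Γ'.neighborSet u ∩ X).ncard = d := by rw [he'in u hu]; exact hd u hu
        have h3 : (Γ'.adjMatrix ℚ) u w = (Γ.adjMatrix ℚ) u w :=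
          adj_entry_iff Γ' Γ u w (hsame u w (Or.inl ⟨hu, hw⟩))
        rw [h1, h2, h3]; ring
      · -- u ∈ X, w ∉ X
        simp only [if_pos hu, if_neg hw]
        rcases hhalf w hw with h0 | hhf | hfl
        · have hna : ¬ Γ.Adj u w := fun h => (hzero w h0 u hu) h.symm
          have hA0 : (Γ.adjMatrix ℚ) u w = 0 := by
            simp [SimpleGraph.adjMatrix_apply, hna]
          have hne : 2 * (Γ.neighborSet w ∩ X).ncard ≠ X.ncard := by omega
          have hiff : Γ'.Adj u w ↔ Γ.Adj u w :=
            (Γ'.adj_comm u w).trans (((hswitch w hw u hu).2 hne).trans (Γ.adj_comm w u))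
          have hA' := adj_entry_iff Γ' Γ u w hiff
          rw [h0, hA', hA0]
          norm_num
        · have hckw : c * ((Γ.neighborSet w ∩ X).ncard : ℚ) = 1 := hck _ hhf
          have hiff : Γ'.Adj u w ↔ ¬ Γ.Adj u w :=
            (Γ'.adj_comm u w).trans (((hswitch w hw u hu).1 hhf).trans
              (not_congr (Γ.adj_comm w u)))
          have hA' := adj_entry_not_iff Γ' Γ u w hiff
          rw [hckw, hA']
          ring
        · have ha : Γ.Adj u w := (hfull w hfl u hu).symm
          have hA1 : (Γ.adjMatrix ℚ) u w = 1 := by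
            simp [SimpleGraph.adjMatrix_apply, ha]
          have hne : 2 * (Γ.neighborSet w ∩ X).ncard ≠ X.ncard := by omega
          have hiff : Γ'.Adj u w ↔ Γ.Adj u w :=
            (Γ'.adj_comm u w).trans (((hswitch w hw u hu).2 hne).trans (Γ.adj_comm w u))
          have hA' := adj_entry_iff Γ' Γ u w hiff
          rw [hfl, hcn, hA', hA1]
          norm_num
      · -- u ∉ X, w ∈ X
        simp only [if_neg hu, if_pos hw]
        rcases hhalf u hu with h0 | hhf | hfl
        · have hna : ¬ Γ.Adj u w := hzero u h0 w hw
          have hA0 : (Γ.adjMatrix ℚ) u w = 0 := by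
            simp [SimpleGraph.adjMatrix_apply, hna]
          have hne : 2 * (Γ.neighborSet u ∩ X).ncard ≠ X.ncard := by omega
          have hA' := adj_entry_iff Γ' Γ u w ((hswitch u hu w hw).2 hne)
          rw [he'out_ne u hu hne, h0, hA', hA0]
          norm_num
        · have hA' := adj_entry_not_iff Γ' Γ u w ((hswitch u hu w hw).1 hhf)
          rw [he'out_eq u hu hhf, hck _ hhf, hA']
          ring
        · have ha : Γ.Adj u w := hfull u hfl w hw
          have hA1 : (Γ.adjMatrix ℚ) u w = 1 := by
            simp [SimpleGraph.adjMatrix_apply, ha]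
          have hne : 2 * (Γ.neighborSet u ∩ X).ncard ≠ X.ncard := by omega
          have hA' := adj_entry_iff Γ' Γ u w ((hswitch u hu w hw).2 hne)
          rw [he'out_ne u hu hne, hfl, hcn, hA', hA1]
          norm_num
      · -- both outside
        simp only [if_neg hu, if_neg hw]
        have h3 : (Γ'.adjMatrix ℚ) u w = (Γ.adjMatrix ℚ) u w :=
          adj_entry_iff Γ' Γ u w (hsame u w (Or.inr ⟨hu, hw⟩))
        rw [h3]; ring
    have hA'eq : Γ'.adjMatrix ℚ = Q * Γ.adjMatrix ℚ * Q := by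
      rw [hQA, Matrix.mul_assoc, hQ2, Matrix.mul_one]
    apply cospectral_of_rat
    rw [hA'eq, charpoly_conj_aux Q (Γ.adjMatrix ℚ) hQ2]
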